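/- (Miller) add(E, N) ≤ 𝔡 and cof(E, N) ≥ 𝔟. -/

import Mathlib

open MeasureTheory Set Filter Cardinal
open Topology

/-- `μ` is the uniform product ("fair coin") probability measure on Cantor space `2^ω`,
characterized by its values on cylinders. -/
def IsFairCoin (μ : Measure (ℕ → Bool)) : Prop :=
  ∀ (s : Finset ℕ) (σ : ℕ → Bool),
    μ {x : ℕ → Bool | ∀ i ∈ s, x i = σ i} = (1 / 2 : ENNReal) ^ s.card

/-- The σ-ideal of μ-null sets. -/
def nullIdeal (μ : Measure (ℕ → Bool)) : Set (Set (ℕ → Bool)) := {A | μ A = 0}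

/-- The σ-ideal of meager subsets of Cantor space. -/
def meagerIdeal : Set (Set (ℕ → Bool)) := {A | IsMeagre A}

/-- The σ-ideal generated by closed measure zero sets. -/
def closedNullIdeal (μ : Measure (ℕ → Bool)) : Set (Set (ℕ → Bool)) :=
  {A | ∃ F : ℕ → Set (ℕ → Bool), (∀ n, IsClosed (F n) ∧ μ (F n) = 0) ∧ A ⊆ ⋃ n, F n}

/-- `add(I, J)`: the least cardinality of a subfamily of `I` whose union is not in `J`. -/
noncomputable def addIJ (I J : Set (Set (ℕ → Bool))) : Cardinal :=
  sInf {c : Cardinal | ∃ A : Set (Set (ℕ → Bool)), A ⊆ I ∧ ⋃₀ A ∉ J ∧ c = #A}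

/-- `cov(J)`: the least cardinality of a subfamily of `J` covering the whole space. -/
noncomputable def covI (J : Set (Set (ℕ → Bool))) : Cardinal :=
  sInf {c : Cardinal | ∃ A : Set (Set (ℕ → Bool)), A ⊆ J ∧ ⋃₀ A = Set.univ ∧ c = #A}

/-- `unif(J)`: the least cardinality of a set of reals not in `J`. -/
noncomputable def unifI (J : Set (Set (ℕ → Bool))) : Cardinal :=
  sInf {c : Cardinal | ∃ X : Set (ℕ → Bool), X ∉ J ∧ c = #X}

/-- `cof(I, J)`: the least cardinality of a subfamily of `J` cofinal over `I`. -/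
noncomputable def cofIJ (I J : Set (Set (ℕ → Bool))) : Cardinal :=
  sInf {c : Cardinal | ∃ A : Set (Set (ℕ → Bool)), A ⊆ J ∧
    (∀ B ∈ I, ∃ C ∈ A, B ⊆ C) ∧ c = #A}

/-- The dominating number 𝔡. -/
noncomputable def frakD : Cardinal :=
  sInf {c : Cardinal | ∃ F : Set (ℕ → ℕ),
    (∀ g : ℕ → ℕ, ∃ f ∈ F, ∀ᶠ n in atTop, g n ≤ f n) ∧ c = #F}

/-- The unbounding number 𝔟. -/
noncomputable def frakB : Cardinal :=
  sInf {c : Cardinal | ∃ F : Set (ℕ → ℕ),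
    (∀ g : ℕ → ℕ, ∃ f ∈ F, ¬ ∀ᶠ n in atTop, f n ≤ g n) ∧ c = #F}

/-! ### Auxiliary development -/

namespace MillerAux

open scoped Classical

/-- Partial cylinder: the set of `x` agreeing with `σ` on `s`. -/
def PC (s : Finset ℕ) (σ : ℕ → Bool) : Set (ℕ → Bool) := {x | ∀ i ∈ s, x i = σ i}

lemma PC_eq_iInter (s : Finset ℕ) (σ : ℕ → Bool) :
    PC s σ = ⋂ i ∈ s, {x : ℕ → Bool | x i = σ i} := by
  ext x; simp [PC]

lemma isOpen_coord (i : ℕ) (b : Bool) : IsOpen {x : ℕ → Bool | x i = b} := by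
  have : {x : ℕ → Bool | x i = b} = (fun x : ℕ → Bool => x i) ⁻¹' {b} := rfl
  rw [this]; exact (isOpen_discrete _).preimage (continuous_apply i)

lemma isClosed_coord (i : ℕ) (b : Bool) : IsClosed {x : ℕ → Bool | x i = b} := by
  have : {x : ℕ → Bool | x i = b} = (fun x : ℕ → Bool => x i) ⁻¹' {b} := rfl
  rw [this]; exact (isClosed_discrete _).preimage (continuous_apply i)

lemma measurable_coord (i : ℕ) (b : Bool) : MeasurableSet {x : ℕ → Bool | x i = b} := by
  have : {x : ℕ → Bool | x i = b} = (fun x : ℕ → Bool => x i) ⁻¹' {b} := rfl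
  rw [this]; exact measurable_pi_apply i (measurableSet_singleton b)

lemma isOpen_PC (s : Finset ℕ) (σ : ℕ → Bool) : IsOpen (PC s σ) := by
  rw [PC_eq_iInter]
  exact isOpen_biInter_finset fun i _ => isOpen_coord i (σ i)

lemma isClosed_PC (s : Finset ℕ) (σ : ℕ → Bool) : IsClosed (PC s σ) := by
  rw [PC_eq_iInter]
  exact isClosed_biInter fun i _ => isClosed_coord i (σ i)

lemma measurableSet_PC (s : Finset ℕ) (σ : ℕ → Bool) : MeasurableSet (PC s σ) := by
  rw [PC_eq_iInter]
  exact MeasurableSet.biInter s.countable_toSet fun i _ => measurable_coord i (σ i)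

/-- The basic cylinder determined by a finite list of bits. -/
def cyl (l : List Bool) : Set (ℕ → Bool) := PC (Finset.range l.length) (fun i => l.getD i false)

lemma mem_cyl {l : List Bool} {x : ℕ → Bool} :
    x ∈ cyl l ↔ ∀ i < l.length, x i = l.getD i false := by
  simp [cyl, PC]

lemma isOpen_cyl (l : List Bool) : IsOpen (cyl l) := isOpen_PC _ _
lemma measurableSet_cyl (l : List Bool) : MeasurableSet (cyl l) := measurableSet_PC _ _

section Meas
variable {μ : Measure (ℕ → Bool)}

lemma measure_PC (hμ : IsFairCoin μ) (s : Finset ℕ) (σ : ℕ → Bool) : μ (PC s σ) = (1/2 : ENNReal) ^ s.card := hμ s σ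

lemma measure_univ_fair (hμ : IsFairCoin μ) : μ (univ : Set (ℕ → Bool)) = 1 := by
  have h := hμ ∅ (fun _ => false)
  simpa using h

lemma measure_cyl (hμ : IsFairCoin μ) (l : List Bool) : μ (cyl l) = (1/2 : ENNReal) ^ l.length := by
  have := hμ (Finset.range l.length) (fun i => l.getD i false)
  simpa [cyl, PC] using this

end Meas

/-! ### Truncation and minimal cylinder decomposition -/

def trunc (l : List Bool) (m : ℕ) : List Bool := List.ofFn (fun i : Fin m => l.getD i false)

@[simp] lemma trunc_length (l : List Bool) (m : ℕ) : (trunc l m).length = m := by simp [trunc]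

lemma trunc_getD (l : List Bool) (m i : ℕ) (h : i < m) :
    (trunc l m).getD i false = l.getD i false := by
  rw [List.getD_eq_getElem _ _ (by simpa using h)]; simp [trunc]

def lstOf (x : ℕ → Bool) (n : ℕ) : List Bool := List.ofFn (fun i : Fin n => x i)

@[simp] lemma lstOf_length (x : ℕ → Bool) (n : ℕ) : (lstOf x n).length = n := by simp [lstOf]

lemma lstOf_getD (x : ℕ → Bool) (n i : ℕ) (h : i < n) : (lstOf x n).getD i false = x i := by
  rw [List.getD_eq_getElem _ _ (by simpa using h)]; simp [lstOf]

lemma trunc_lstOf (x : ℕ → Bool) (n m : ℕ) (h : m ≤ n) : trunc (lstOf x n) m = lstOf x m := by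
  apply List.ext_getElem (by simp)
  intro i h1 h2
  simp only [trunc_length] at h1
  have := trunc_getD (lstOf x n) m i h1
  rw [List.getD_eq_getElem _ _ (by simpa using h1)] at this
  rw [lstOf_getD x n i (lt_of_lt_of_le h1 h)] at this
  rw [this]; simp [lstOf]

def minCyls (U : Set (ℕ → Bool)) : Set (List Bool) :=
  {l | cyl l ⊆ U ∧ ∀ m < l.length, ¬ cyl (trunc l m) ⊆ U}

lemma exists_cyl_subset {U : Set (ℕ → Bool)} (hU : IsOpen U) {x : ℕ → Bool} (hx : x ∈ U) :
    ∃ n, cyl (lstOf x n) ⊆ U := by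
  obtain ⟨I, u, h1, h2⟩ := isOpen_pi_iff.mp hU x hx
  refine ⟨I.sup id + 1, fun y hy => h2 ?_⟩
  rw [mem_cyl] at hy
  intro i hi
  have hilt : i < I.sup id + 1 := Nat.lt_succ_of_le (Finset.le_sup (f := id) hi)
  have := hy i (by simpa using hilt)
  rw [lstOf_getD x _ i hilt] at this
  rw [this]
  exact (h1 i hi).2

lemma mem_minCyls_cyl {U : Set (ℕ → Bool)} (hU : IsOpen U) {x : ℕ → Bool} (hx : x ∈ U) :
    ∃ l ∈ minCyls U, x ∈ cyl l := by
  have hex := exists_cyl_subset hU hx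
  let n₀ := Nat.find hex
  refine ⟨lstOf x n₀, ⟨Nat.find_spec hex, ?_⟩, ?_⟩
  · intro m hm
    rw [lstOf_length] at hm
    rw [trunc_lstOf x n₀ m (le_of_lt hm)]
    exact Nat.find_min hex hm
  · rw [mem_cyl]
    intro i hi
    rw [lstOf_length] at hi
    exact (lstOf_getD x n₀ i hi).symm

lemma minCyls_disjoint (U : Set (ℕ → Bool)) : (minCyls U).PairwiseDisjoint cyl := by
  intro l hl l' hl' hne
  rw [Function.onFun, Set.disjoint_left]
  intro y hy hy'
  rw [mem_cyl] at hy hy'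
  rcases lt_trichotomy l.length l'.length with hlt | heq | hgt
  · apply hl'.2 l.length hlt
    have : cyl (trunc l' l.length) = cyl l := by
      ext z
      rw [mem_cyl, mem_cyl]
      simp only [trunc_length]
      refine forall₂_congr fun i hi => ?_
      rw [trunc_getD l' l.length i hi, ← hy i hi, hy' i (lt_trans hi hlt)]
    rw [this]
    exact hl.1
  · apply hne
    apply List.ext_getElem heq
    intro i h1 h2
    have := (hy i h1).symm.trans (hy' i h2)
    rwa [List.getD_eq_getElem _ _ h1, List.getD_eq_getElem _ _ h2] at this
  · apply hl.2 l'.length hgt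
    have : cyl (trunc l l'.length) = cyl l' := by
      ext z
      rw [mem_cyl, mem_cyl]
      simp only [trunc_length]
      refine forall₂_congr fun i hi => ?_
      rw [trunc_getD l l'.length i hi, ← hy' i hi, hy i (lt_trans hi hgt)]
    rw [this]
    exact hl'.1

lemma minCyls_cover {U : Set (ℕ → Bool)} (hU : IsOpen U) : U = ⋃ l ∈ minCyls U, cyl l := by
  apply Set.Subset.antisymm
  · intro x hx
    obtain ⟨l, hl, hxl⟩ := mem_minCyls_cyl hU hx
    exact Set.mem_biUnion hl hxl
  · exact Set.iUnion₂_subset fun l hl => hl.1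

lemma tsum_minCyls {μ : Measure (ℕ → Bool)} (hμ : IsFairCoin μ) {U : Set (ℕ → Bool)}
    (hU : IsOpen U) :
    ∑' l : List Bool, (if l ∈ minCyls U then (1/2:ENNReal)^l.length else 0) = μ U := by
  have h1 : μ U = ∑' l : ↥(minCyls U), μ (cyl l.1) := by
    conv_lhs => rw [minCyls_cover hU]
    exact measure_biUnion (Set.to_countable _) (minCyls_disjoint U) (fun l _ => measurableSet_cyl l)
  rw [h1]
  have h2 : ∀ l : ↥(minCyls U), μ (cyl l.1) = (fun l : List Bool => (1/2:ENNReal)^l.length) l.1 :=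
    fun l => measure_cyl hμ l.1
  rw [tsum_congr h2, tsum_subtype (minCyls U) (fun l : List Bool => (1/2:ENNReal)^l.length)]
  apply tsum_congr
  intro l
  rw [Set.indicator_apply]

/-! ### Length-tail of the cylinder weights -/

noncomputable def Ptail (S : Set (List Bool)) (q : ℕ) : ENNReal :=
  ∑' l : List Bool, (if l ∈ S ∧ q < l.length then (1/2:ENNReal)^l.length else 0)

lemma Ptail_antitone (S : Set (List Bool)) {q q' : ℕ} (h : q ≤ q') : Ptail S q' ≤ Ptail S q := by
  apply ENNReal.tsum_le_tsum
  intro l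
  by_cases hc : l ∈ S ∧ q' < l.length
  · rw [if_pos hc, if_pos ⟨hc.1, lt_of_le_of_lt h hc.2⟩]
  · rw [if_neg hc]; exact zero_le

lemma exists_Ptail_le (S : Set (List Bool))
    (hfin : ∑' l : List Bool, (if l ∈ S then (1/2:ENNReal)^l.length else 0) ≠ ⊤)
    {ε : ENNReal} (hε : 0 < ε) : ∃ q, Ptail S q ≤ ε := by
  set w : List Bool → ENNReal := fun l => if l ∈ S then (1/2:ENNReal)^l.length else 0 with hw
  have htt := ENNReal.tendsto_tsum_compl_atTop_zero (f := w) hfin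
  have hev := htt.eventually_lt_const hε
  obtain ⟨F, hF⟩ := hev.exists
  refine ⟨F.sup List.length, ?_⟩
  have hsub : ∑' x : {l : List Bool // l ∉ F}, w x = ∑' l : List Bool,
      Set.indicator {l : List Bool | l ∉ F} w l := tsum_subtype {l : List Bool | l ∉ F} w
  calc Ptail S (F.sup List.length)
      ≤ ∑' l : List Bool, Set.indicator {l : List Bool | l ∉ F} w l := by
        apply ENNReal.tsum_le_tsum
        intro l
        by_cases hc : l ∈ S ∧ F.sup List.length < l.length
        · have hnF : l ∉ F := by
            intro hmem
            exact absurd (Finset.le_sup (f := List.length) hmem) (not_le.mpr hc.2)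
          rw [if_pos hc, Set.indicator_of_mem (by exact hnF) w, hw]
          simp only [if_pos hc.1]
          exact le_refl _
        · rw [if_neg hc]; exact zero_le
    _ = ∑' x : {l : List Bool // l ∉ F}, w x := hsub.symm
    _ ≤ ε := le_of_lt hF

/-! ### The scales sequence and the closed null test sets -/

def aSeq (g : ℕ → ℕ) : ℕ → ℕ
  | 0 => 0
  | k+1 => max (aSeq g k + 1) (g (aSeq g k))

lemma aSeq_lt_succ (g : ℕ → ℕ) (k : ℕ) : aSeq g k < aSeq g (k+1) :=
  lt_of_lt_of_le (Nat.lt_succ_self _) (le_max_left _ _)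

lemma aSeq_strictMono (g : ℕ → ℕ) : StrictMono (aSeq g) :=
  strictMono_nat_of_lt_succ (aSeq_lt_succ g)

lemma aSeq_ge (g : ℕ → ℕ) (k : ℕ) : k ≤ aSeq g k := by
  induction k with
  | zero => exact Nat.zero_le _
  | succ n ih => exact Nat.succ_le_of_lt (lt_of_le_of_lt ih (aSeq_lt_succ g n))

lemma aSeq_ge_g (g : ℕ → ℕ) (k : ℕ) : g (aSeq g k) ≤ aSeq g (k+1) := le_max_right _ _

def tailSet (g : ℕ → ℕ) (K : ℕ) : Set (ℕ → Bool) := {x | ∀ k, K ≤ k → x (aSeq g k) = false}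

def psiSet (g : ℕ → ℕ) : Set (ℕ → Bool) := ⋃ K, tailSet g K

lemma isClosed_tailSet (g : ℕ → ℕ) (K : ℕ) : IsClosed (tailSet g K) := by
  have : tailSet g K = ⋂ k, ⋂ (_ : K ≤ k), {x : ℕ → Bool | x (aSeq g k) = false} := by
    ext x; simp [tailSet]
  rw [this]
  exact isClosed_iInter fun k => isClosed_iInter fun _ => isClosed_coord (aSeq g k) false

lemma measure_tailSet {μ : Measure (ℕ → Bool)} (hμ : IsFairCoin μ) (g : ℕ → ℕ) (K : ℕ) :
    μ (tailSet g K) = 0 := by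
  have hb : ∀ j : ℕ, μ (tailSet g K) ≤ (1/2:ENNReal)^j := by
    intro j
    have hinj : Function.Injective (fun i : ℕ => aSeq g (K + i)) := by
      intro i j h
      have := (aSeq_strictMono g).injective h
      omega
    have hsub : tailSet g K ⊆
        PC ((Finset.range j).image (fun i => aSeq g (K + i))) (fun _ => false) := by
      intro x hx i hi
      simp only [Finset.mem_image, Finset.mem_range] at hi
      obtain ⟨m, _, rfl⟩ := hi
      exact hx (K + m) (Nat.le_add_right _ _)
    calc μ (tailSet g K) ≤ μ (PC ((Finset.range j).image (fun i => aSeq g (K + i)))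
          (fun _ => false)) := measure_mono hsub
      _ = (1/2:ENNReal)^(((Finset.range j).image (fun i => aSeq g (K + i))).card) :=
          measure_PC hμ _ _
      _ = (1/2:ENNReal)^j := by
          rw [Finset.card_image_of_injective _ hinj, Finset.card_range]
  have h0 : Tendsto (fun j : ℕ => (1/2:ENNReal)^j) atTop (𝓝 0) :=
    ENNReal.tendsto_pow_atTop_nhds_zero_of_lt_one (by norm_num)
  exact le_antisymm (ge_of_tendsto' h0 hb) (zero_le)

lemma psiSet_mem_closedNullIdeal {μ : Measure (ℕ → Bool)} (hμ : IsFairCoin μ) (g : ℕ → ℕ) :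
    psiSet g ∈ closedNullIdeal μ :=
  ⟨tailSet g, fun K => ⟨isClosed_tailSet g K, measure_tailSet hμ g K⟩, subset_rfl⟩

lemma half_pow_sub_le (n c m : ℕ) (hcn : c ≤ n) (hcm : c ≤ m) :
    (1/2:ENNReal)^(n-c) ≤ 2^m * (1/2)^n := by
  have h2 : (2:ENNReal)^c * (1/2)^c = 1 := by
    rw [← mul_pow, one_div, ENNReal.mul_inv_cancel (by norm_num) (by norm_num), one_pow]
  calc (1/2:ENNReal)^(n-c) = ((2:ENNReal)^c * (1/2)^c) * (1/2)^(n-c) := by rw [h2, one_mul]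
    _ = 2^c * (1/2)^n := by rw [mul_assoc, ← pow_add, Nat.add_sub_cancel' hcn]
    _ ≤ 2^m * (1/2)^n := by
        exact mul_le_mul_left (pow_le_pow_right₀ one_le_two hcm) _

lemma two_pow_mul_half_pow (m r : ℕ) :
    (2:ENNReal)^m * (1/2)^(m + r) = (1/2)^r := by
  rw [pow_add, ← mul_assoc, ← mul_pow, one_div,
    ENNReal.mul_inv_cancel (by norm_num) (by norm_num), one_pow, one_mul]

lemma tsum_half_geo : ∑' n : ℕ, (1/2 : ENNReal)^(n+7) = (1/2)^6 := by
  simp_rw [pow_add]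
  rw [ENNReal.tsum_mul_right, ENNReal.tsum_geometric]
  rw [show (1:ENNReal) - 1/2 = 1/2 by rw [one_div]; exact ENNReal.one_sub_inv_two]
  rw [one_div, inv_inv, pow_succ, mul_comm ((2:ENNReal)⁻¹^6) (2⁻¹), ← mul_assoc,
    show (2:ENNReal) * 2⁻¹ = 1 from ENNReal.mul_inv_cancel (by norm_num) (by norm_num), one_mul]

/-! ### The key lemma -/

lemma lemmaB {μ : Measure (ℕ → Bool)} (hμ : IsFairCoin μ) (G : Set (ℕ → Bool)) (hG : μ G = 0) :
    ∃ φ : ℕ → ℕ, ∀ g : ℕ → ℕ, (∀ᶠ p in atTop, φ p ≤ g p) → ¬ (psiSet g ⊆ G) := by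
  haveI : IsProbabilityMeasure μ := ⟨measure_univ_fair hμ⟩
  obtain ⟨U, hGU, hUopen, hUμ⟩ := Set.exists_isOpen_lt_of_lt G (1/2) (by rw [hG]; norm_num)
  set S := minCyls U with hS
  have htot : ∑' l : List Bool, (if l ∈ S then (1/2:ENNReal)^l.length else 0) = μ U :=
    tsum_minCyls hμ hUopen
  have htne : (∑' l : List Bool, (if l ∈ S then (1/2:ENNReal)^l.length else 0)) ≠ ⊤ := by
    rw [htot]
    exact (lt_of_lt_of_le hUμ le_top).ne
  have hq : ∀ p : ℕ, ∃ q, Ptail S q ≤ (1/2:ENNReal)^(2*p+10) := by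
    intro p
    refine exists_Ptail_le S htne ?_
    exact ENNReal.pow_pos (by norm_num) _
  choose φ hφ using hq
  refine ⟨φ, ?_⟩
  intro g hdom hsub
  obtain ⟨N, hN⟩ := eventually_atTop.mp hdom
  set a := aSeq g with ha
  set K := N + 1 with hK
  set Y : Set (ℕ → Bool) := tailSet g K with hY
  have hYG : Y ⊆ G := fun x hx => hsub (Set.mem_iUnion.mpr ⟨K, hx⟩)
  have hYS : Y ⊆ ⋃ i : ↥S, cyl i.1 := by
    intro x hx
    obtain ⟨l, hl, hxl⟩ := mem_minCyls_cyl hUopen (hGU (hYG hx))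
    exact Set.mem_iUnion.mpr ⟨⟨l, hl⟩, hxl⟩
  have hYcomp : IsCompact Y := (isClosed_tailSet g K).isCompact
  obtain ⟨t, ht⟩ := hYcomp.elim_finite_subcover (fun i : ↥S => cyl i.1)
    (fun i => isOpen_cyl i.1) hYS
  set F' : Finset (List Bool) := t.image Subtype.val with hF'
  have hF'S : ∀ l ∈ F', l ∈ S := by
    intro l hl
    obtain ⟨i, _, rfl⟩ := Finset.mem_image.mp hl
    exact i.2
  set forced : ℕ → Prop := fun i => ∃ k, K ≤ k ∧ a k = i with hforced
  set c : List Bool → ℕ :=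
    fun l => ((Finset.range l.length).filter (fun i => forced i)).card with hcdef
  set Bset : List Bool → Set (ℕ → Bool) :=
    fun l => PC ((Finset.range l.length).filter (fun i => ¬ forced i))
      (fun i => l.getD i false) with hBset
  have huniv : (Set.univ : Set (ℕ → Bool)) ⊆ ⋃ l ∈ F', Bset l := by
    intro x _
    set x' : ℕ → Bool := fun i => if forced i then false else x i with hx'
    have hx'Y : x' ∈ Y := by
      intro k hk
      simp only [hx']
      rw [if_pos ⟨k, hk, rfl⟩]
    obtain ⟨i, hit, hxc⟩ := Set.mem_iUnion₂.mp (ht hx'Y)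
    refine Set.mem_biUnion (Finset.mem_image_of_mem Subtype.val hit) ?_
    simp only [hBset, PC, Set.mem_setOf_eq]
    intro j hj
    rw [Finset.mem_filter, Finset.mem_range] at hj
    rw [mem_cyl] at hxc
    have h1 := hxc j hj.1
    have h2 : x' j = x j := if_neg hj.2
    rw [← h2]
    exact h1
  have h1le : (1:ENNReal) ≤ ∑ l ∈ F', μ (Bset l) := by
    calc (1:ENNReal) = μ Set.univ := (measure_univ (μ := μ)).symm
      _ ≤ μ (⋃ l ∈ F', Bset l) := measure_mono huniv
      _ ≤ ∑ l ∈ F', μ (Bset l) := measure_biUnion_finset_le F' Bset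
  have hBval : ∀ l, μ (Bset l) = (1/2:ENNReal)^(l.length - c l) := by
    intro l
    rw [hBset]
    rw [measure_PC hμ]
    congr 1
    have hsum : c l + ((Finset.range l.length).filter (fun i => ¬ forced i)).card
        = l.length := by
      simp only [hcdef]
      have h := Finset.card_filter_add_card_filter_not
        (s := Finset.range l.length) (p := fun i => forced i)
      rwa [Finset.card_range] at h
    omega
  set κ : List Bool → ℕ :=
    fun l => Nat.findGreatest (fun k => K ≤ k ∧ a k < l.length) l.length with hκdef
  have hcκ : ∀ l, c l ≤ κ l + 1 := by
    intro l
    have hsubim : ((Finset.range l.length).filter (fun i => forced i)) ⊆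
        (Finset.range (κ l + 1)).image a := by
      intro i hi
      rw [Finset.mem_filter, Finset.mem_range] at hi
      obtain ⟨hilen, k, hKk, hak⟩ := hi.imp_right id
      have hklen : k ≤ l.length := le_trans (le_trans (aSeq_ge g k) (le_of_eq hak))
        (le_of_lt hilen)
      have hkκ : k ≤ κ l := Nat.le_findGreatest hklen ⟨hKk, by rw [hak]; exact hilen⟩
      exact Finset.mem_image.mpr ⟨k, Finset.mem_range.mpr (Nat.lt_succ_of_le hkκ), hak⟩
    calc c l ≤ ((Finset.range (κ l + 1)).image a).card := Finset.card_le_card hsubim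
      _ ≤ (Finset.range (κ l + 1)).card := Finset.card_image_le
      _ = κ l + 1 := Finset.card_range _
  have hκspec : ∀ l, c l ≠ 0 → K ≤ κ l ∧ a (κ l) < l.length := by
    intro l hcl
    obtain ⟨i, hi⟩ := Finset.card_pos.mp (Nat.pos_of_ne_zero hcl)
    rw [Finset.mem_filter, Finset.mem_range] at hi
    obtain ⟨hilen, k, hKk, hak⟩ := hi.imp_right id
    have hklen : k ≤ l.length := le_trans (le_trans (aSeq_ge g k) (le_of_eq hak))
      (le_of_lt hilen)
    exact Nat.findGreatest_spec (P := fun k => K ≤ k ∧ a k < l.length) hklen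
      ⟨hKk, by rw [hak]; exact hilen⟩
  have hsplit : ∑ l ∈ F', μ (Bset l)
      = ∑ l ∈ F'.filter (fun l => c l = 0), μ (Bset l)
        + ∑ l ∈ F'.filter (fun l => ¬ c l = 0), μ (Bset l) :=
    (Finset.sum_filter_add_sum_filter_not F' _ _).symm
  have hpart0 : ∑ l ∈ F'.filter (fun l => c l = 0), μ (Bset l) ≤ μ U := by
    rw [← htot]
    calc ∑ l ∈ F'.filter (fun l => c l = 0), μ (Bset l)
        = ∑ l ∈ F'.filter (fun l => c l = 0),
            (if l ∈ S then (1/2:ENNReal)^l.length else 0) := by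
          apply Finset.sum_congr rfl
          intro l hl
          rw [Finset.mem_filter] at hl
          rw [hBval l, hl.2, Nat.sub_zero, if_pos (hF'S l hl.1)]
      _ ≤ ∑' l : List Bool, (if l ∈ S then (1/2:ENNReal)^l.length else 0) :=
          ENNReal.sum_le_tsum _
  have hpart1 : ∑ l ∈ F'.filter (fun l => ¬ c l = 0), μ (Bset l) ≤ (1/2:ENNReal)^6 := by
    set f1 := F'.filter (fun l => ¬ c l = 0) with hf1
    have hstep1 : ∑ l ∈ f1, μ (Bset l)
        ≤ ∑ l ∈ f1, 2^(κ l + 1) * (1/2:ENNReal)^l.length := by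
      apply Finset.sum_le_sum
      intro l _
      rw [hBval l]
      have hclen : c l ≤ l.length := by
        calc c l ≤ (Finset.range l.length).card := Finset.card_filter_le _ _
          _ = l.length := Finset.card_range _
      exact half_pow_sub_le l.length (c l) (κ l + 1) hclen (hcκ l)
    have hstep2 : ∑ l ∈ f1, 2^(κ l + 1) * (1/2:ENNReal)^l.length
        ≤ ∑ k ∈ f1.image κ, (1/2:ENNReal)^(k+7) := by
      rw [← Finset.sum_fiberwise_of_maps_to (fun l hl => Finset.mem_image_of_mem κ hl)
        (fun l => 2^(κ l + 1) * (1/2:ENNReal)^l.length)]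
      apply Finset.sum_le_sum
      intro k hk
      obtain ⟨l₀, hl₀, hκl₀⟩ := Finset.mem_image.mp hk
      have hl₀c : ¬ c l₀ = 0 := (Finset.mem_filter.mp hl₀).2
      have hKk : K ≤ k := hκl₀ ▸ (hκspec l₀ hl₀c).1
      have hfib : ∑ l ∈ f1.filter (fun l => κ l = k), 2^(κ l + 1) * (1/2:ENNReal)^l.length
          = 2^(k+1) * ∑ l ∈ f1.filter (fun l => κ l = k), (1/2:ENNReal)^l.length := by
        rw [Finset.mul_sum]
        apply Finset.sum_congr rfl
        intro l hl
        rw [(Finset.mem_filter.mp hl).2]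
      rw [hfib]
      have hinner : ∑ l ∈ f1.filter (fun l => κ l = k), (1/2:ENNReal)^l.length
          ≤ Ptail S (a k) := by
        have hcg : ∀ l ∈ f1.filter (fun l => κ l = k),
            (1/2:ENNReal)^l.length
              = (if l ∈ S ∧ a k < l.length then (1/2:ENNReal)^l.length else 0) := by
          intro l hl
          rw [Finset.mem_filter] at hl
          have hlf1 := hl.1
          rw [hf1, Finset.mem_filter] at hlf1
          have hlS : l ∈ S := hF'S l hlf1.1
          have hlen : a k < l.length := by
            have := (hκspec l hlf1.2).2
            rwa [hl.2] at this
          rw [if_pos ⟨hlS, hlen⟩]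
        rw [Finset.sum_congr rfl hcg]
        exact ENNReal.sum_le_tsum _
      have hPt : Ptail S (a k) ≤ (1/2:ENNReal)^(2*k+8) := by
        have hk1 : ∃ j, k = j + 1 := ⟨k - 1, by omega⟩
        obtain ⟨j, rfl⟩ := hk1
        have hjN : N ≤ a j := le_trans (by omega) (aSeq_ge g j)
        have hφg : φ (a j) ≤ g (a j) := hN (a j) hjN
        have hga : g (a j) ≤ a (j+1) := aSeq_ge_g g j
        have h1 : Ptail S (a (j+1)) ≤ Ptail S (φ (a j)) :=
          Ptail_antitone S (le_trans hφg hga)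
        refine le_trans h1 (le_trans (hφ (a j)) ?_)
        have harith : 2*(j+1)+8 ≤ 2*(a j)+10 := by
          have haj := aSeq_ge g j
          rw [← ha] at haj
          omega
        exact pow_le_pow_of_le_one (zero_le) (by norm_num) harith
      calc 2^(k+1) * ∑ l ∈ f1.filter (fun l => κ l = k), (1/2:ENNReal)^l.length
          ≤ 2^(k+1) * (1/2:ENNReal)^(2*k+8) :=
            mul_le_mul_right (le_trans hinner hPt) _
        _ = (1/2:ENNReal)^(k+7) := by
            rw [show 2*k+8 = (k+1) + (k+7) by omega]
            exact two_pow_mul_half_pow (k+1) (k+7)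
    have hstep3 : ∑ k ∈ f1.image κ, (1/2:ENNReal)^(k+7) ≤ (1/2:ENNReal)^6 := by
      calc ∑ k ∈ f1.image κ, (1/2:ENNReal)^(k+7)
          ≤ ∑' k : ℕ, (1/2:ENNReal)^(k+7) := ENNReal.sum_le_tsum _
        _ = (1/2:ENNReal)^6 := tsum_half_geo
    exact le_trans hstep1 (le_trans hstep2 hstep3)
  have hfinal : (1:ENNReal) ≤ μ U + (1/2)^6 := by
    refine le_trans h1le ?_
    rw [hsplit]
    exact add_le_add hpart0 hpart1
  have hhalf : ((1:ENNReal)/2)^6 ≤ 1/2 := by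
    calc ((1:ENNReal)/2)^6 ≤ ((1:ENNReal)/2)^1 :=
      pow_le_pow_of_le_one (zero_le) (by norm_num) (by norm_num)
      _ = 1/2 := pow_one _
  have hcontra : (1:ENNReal)/2 ≤ μ U := by
    have h2 : (1:ENNReal) ≤ μ U + 1/2 := le_trans hfinal (add_le_add_right hhalf _)
    have h3 : (1:ENNReal) - 1/2 ≤ μ U := tsub_le_iff_right.mpr h2
    rwa [show (1:ENNReal) - 1/2 = 1/2 by rw [one_div]; exact ENNReal.one_sub_inv_two] at h3
  exact absurd hcontra (not_le.mpr hUμ)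

end MillerAux


open MillerAux

theorem miller_add_le_d_and_cof_ge_b (μ : Measure (ℕ → Bool)) (hμ : IsFairCoin μ) :
    addIJ (closedNullIdeal μ) (nullIdeal μ) ≤ frakD ∧
    frakB ≤ cofIJ (closedNullIdeal μ) (nullIdeal μ) := by
  classical
  have hphi : ∀ G : Set (ℕ → Bool), ∃ φ : ℕ → ℕ, μ G = 0 →
      ∀ g : ℕ → ℕ, (∀ᶠ p in atTop, φ p ≤ g p) → ¬ (psiSet g ⊆ G) := by
    intro G
    by_cases h : μ G = 0
    · obtain ⟨φ, hφ⟩ := lemmaB hμ G h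
      exact ⟨φ, fun _ => hφ⟩
    · exact ⟨fun _ => 0, fun h' => absurd h' h⟩
  choose Φ hΦ using hphi
  constructor
  · apply le_csInf
    · exact ⟨#(Set.univ : Set (ℕ → ℕ)),
        Set.univ, fun g => ⟨g, Set.mem_univ g, Eventually.of_forall fun n => le_rfl⟩, rfl⟩
    · rintro c ⟨D, hD, rfl⟩
      set A : Set (Set (ℕ → Bool)) := psiSet '' D with hA
      have hAmem : A ⊆ closedNullIdeal μ := by
        rintro _ ⟨f, _, rfl⟩
        exact psiSet_mem_closedNullIdeal hμ f
      have hAnot : ⋃₀ A ∉ nullIdeal μ := by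
        intro hnull
        obtain ⟨f, hfD, hf⟩ := hD (Φ (⋃₀ A))
        exact hΦ (⋃₀ A) hnull f hf (fun x hx => ⟨psiSet f, ⟨f, hfD, rfl⟩, hx⟩)
      calc addIJ (closedNullIdeal μ) (nullIdeal μ) ≤ #A :=
            csInf_le (OrderBot.bddBelow _) ⟨A, hAmem, hAnot, rfl⟩
        _ ≤ #D := Cardinal.mk_image_le
  · apply le_csInf
    · refine ⟨#(nullIdeal μ), nullIdeal μ, subset_rfl, ?_, rfl⟩
      intro B hB
      refine ⟨B, ?_, subset_rfl⟩
      obtain ⟨F, hF, hsub⟩ := hB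
      have h0 : μ (⋃ n, F n) = 0 := measure_iUnion_null fun n => (hF n).2
      exact measure_mono_null hsub h0
    · rintro c ⟨A, hAN, hAcof, rfl⟩
      set F : Set (ℕ → ℕ) := Φ '' A with hF
      have hFprop : ∀ g : ℕ → ℕ, ∃ f ∈ F, ¬ ∀ᶠ n in atTop, f n ≤ g n := by
        intro g
        obtain ⟨C, hCA, hgC⟩ := hAcof (psiSet g) (psiSet_mem_closedNullIdeal hμ g)
        refine ⟨Φ C, ⟨C, hCA, rfl⟩, fun hev => ?_⟩
        exact hΦ C (hAN hCA) g hev hgC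
      calc frakB ≤ #F := csInf_le (OrderBot.bddBelow _) ⟨F, hFprop, rfl⟩
        _ ≤ #A := Cardinal.mk_image_le
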